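/- arXiv:1907.13243 — 4 statements merged into one kernel-verified Lean document; each statement's English description precedes it below -/
import Mathlib

section
/- There exists α_0 ∈ (0, π/4] such that for every α ∈ (0, α_0] the constant c(α) := 10 sin(2α) − 10 sin(3α)/cos(α) + 5 sin(4α)/cos(α)^2 − sin(5α)/cos(α)^3 is strictly positive, the function u ↦ 10 sin(2α) − 10 u sin(3α) + 5 u^2 sin(4α) − u^3 sin(5α) is monotonically decreasing on [0, 1/cos(α)], and consequently 10 sin(2α) − 10 u sin(3α) + 5 u^2 sin(4α) − u^3 sin(5α) ≥ c(α) for all u ∈ [0, 1/cos(α)]. In particular, for z = z_0 + u z_0 e^{i(π−α)} with z_0 > 0 and u ∈ [0, 1/cos(α)], one has Re(i θ(z)) ≥ 16 c(α) z_0^5 u^2. -/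
/-- The phase function `θ(z) = 16 z^5 − 80 z₀^4 z`. -/
noncomputable def theta (z₀ : ℝ) (z : ℂ) : ℂ := 16 * z ^ 5 - 80 * (z₀ : ℂ) ^ 4 * z

/-- The constant `c(α) = 10 sin 2α − 10 sin 3α / cos α + 5 sin 4α / cos² α − sin 5α / cos³ α`. -/
noncomputable def cα (α : ℝ) : ℝ :=
  10 * Real.sin (2 * α) - 10 * Real.sin (3 * α) / Real.cos α
    + 5 * Real.sin (4 * α) / Real.cos α ^ 2 - Real.sin (5 * α) / Real.cos α ^ 3

lemma aux_P_pos (α : ℝ) (h0 : 0 < α) (h1 : α ≤ 1/10) :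
    0 < 10 * Real.cos α ^3 * Real.sin (2*α) - 10 * Real.cos α ^2 * Real.sin (3*α)
      + 5 * Real.cos α * Real.sin (4*α) - Real.sin (5*α) := by
  have hα2 : α^2 ≤ 1/100 := by nlinarith
  have hα3 : α^3 ≤ α/100 := by nlinarith
  have hc1 : Real.cos α ≤ 1 := Real.cos_le_one α
  have hcl : 1 - α^2/2 ≤ Real.cos α := Real.one_sub_sq_div_two_le_cos
  have hc : (995/1000 : ℝ) ≤ Real.cos α := by nlinarith
  have hcpos : (0:ℝ) < Real.cos α := by linarith
  have s2l : 2*α - (2*α)^3/4 < Real.sin (2*α) := by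
    have := Real.sin_gt_sub_cube (x := 2*α) (by linarith)
    linarith [pow_pos (show (0:ℝ) < 2*α by linarith) 3]
  have s3u : Real.sin (3*α) ≤ 3*α := Real.sin_le (by linarith)
  have s3nn : (0:ℝ) ≤ Real.sin (3*α) := Real.sin_nonneg_of_nonneg_of_le_pi (by linarith)
    (by nlinarith [Real.pi_gt_three])
  have s4l : 4*α - (4*α)^3/4 < Real.sin (4*α) := by
    have := Real.sin_gt_sub_cube (x := 4*α) (by linarith)
    linarith [pow_pos (show (0:ℝ) < 4*α by linarith) 3]
  have s5u : Real.sin (5*α) ≤ 5*α := Real.sin_le (by linarith)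
  have hs2 : (198/100)*α ≤ Real.sin (2*α) := by nlinarith
  have hs4 : (384/100)*α ≤ Real.sin (4*α) := by nlinarith
  have hc2l : (995/1000 : ℝ)^2 ≤ Real.cos α ^ 2 := by nlinarith
  have hc3 : (985/1000 : ℝ) ≤ Real.cos α ^ 3 := by
    nlinarith [mul_le_mul hc2l hc (by norm_num) (by positivity)]
  have hc2 : Real.cos α ^ 2 ≤ 1 := by nlinarith
  have t1 : (985/1000 : ℝ) * ((198/100)*α) ≤ Real.cos α ^3 * Real.sin (2*α) :=
    mul_le_mul hc3 hs2 (by linarith) (by linarith)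
  have t2 : Real.cos α ^2 * Real.sin (3*α) ≤ 1 * (3*α) :=
    mul_le_mul hc2 s3u s3nn (by norm_num)
  have t3 : (995/1000 : ℝ) * ((384/100)*α) ≤ Real.cos α * Real.sin (4*α) :=
    mul_le_mul hc hs4 (by linarith) (by linarith)
  nlinarith

lemma aux_bracket (α u v : ℝ) (h0 : 0 < α) (h1 : α ≤ 1/10) (hu : 0 ≤ u) (hv : 0 ≤ v) :
    0 ≤ 10 * Real.sin (3*α) - 5*(u+v) * Real.sin (4*α) + (u^2+u*v+v^2) * Real.sin (5*α) := by
  have hα2 : α^2 ≤ 1/100 := by nlinarith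
  have hα3 : α^3 ≤ α/100 := by nlinarith
  have s3l : 3*α - (3*α)^3/4 < Real.sin (3*α) := by
    have := Real.sin_gt_sub_cube (x := 3*α) (by linarith)
    linarith [pow_pos (show (0:ℝ) < 3*α by linarith) 3]
  have s4u : Real.sin (4*α) ≤ 4*α := Real.sin_le (by linarith)
  have s5l : 5*α - (5*α)^3/4 < Real.sin (5*α) := by
    have := Real.sin_gt_sub_cube (x := 5*α) (by linarith)
    linarith [pow_pos (show (0:ℝ) < 5*α by linarith) 3]
  have s5nn : (0:ℝ) ≤ Real.sin (5*α) := Real.sin_nonneg_of_nonneg_of_le_pi (by linarith)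
    (by nlinarith [Real.pi_gt_three])
  have hs3 : (29325/10000)*α ≤ Real.sin (3*α) := by linarith
  have hs5 : (75/16)*α ≤ Real.sin (5*α) := by linarith
  have A : 0 ≤ (u+v) * (4*α - Real.sin (4*α)) :=
    mul_nonneg (by linarith) (by linarith)
  have B : 0 ≤ (u-v)^2 * Real.sin (5*α) := mul_nonneg (sq_nonneg _) s5nn
  have C : ((3:ℝ)/4*(u+v)^2) * ((75/16)*α) ≤ ((3:ℝ)/4*(u+v)^2) * Real.sin (5*α) :=
    mul_le_mul_of_nonneg_left hs5 (by positivity)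
  nlinarith [mul_nonneg h0.le (sq_nonneg (u+v - 128/45)), sq_nonneg (u-v)]

lemma aux_re_eq (α z₀ u : ℝ) :
    (Complex.I * theta z₀ ((z₀ : ℂ) + (u : ℂ) * (z₀ : ℂ) *
        Complex.exp (Complex.I * ((Real.pi : ℂ) - (α : ℂ))))).re
      = 16 * z₀^5 * u^2 * (10 * Real.sin (2*α) - 10 * u * Real.sin (3*α)
          + 5 * u^2 * Real.sin (4*α) - u^3 * Real.sin (5*α)) := by
  have hexp : Complex.exp (Complex.I * ((Real.pi : ℂ) - (α : ℂ)))
      = (-(Real.cos α : ℂ)) + (Real.sin α : ℂ) * Complex.I := by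
    rw [mul_comm, Complex.exp_mul_I]
    have h1 : ((Real.pi : ℂ) - (α : ℂ)) = ((Real.pi - α : ℝ) : ℂ) := by push_cast; ring
    rw [h1, ← Complex.ofReal_cos, ← Complex.ofReal_sin, Real.cos_pi_sub, Real.sin_pi_sub,
      Complex.ofReal_neg]
  have hz : (z₀ : ℂ) + (u : ℂ) * (z₀ : ℂ) *
      Complex.exp (Complex.I * ((Real.pi : ℂ) - (α : ℂ)))
      = ((z₀*(1-u*Real.cos α) : ℝ) : ℂ) + ((z₀*u*Real.sin α : ℝ) : ℂ) * Complex.I := by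
    rw [hexp]; push_cast; ring
  rw [hz]
  have hre : ∀ a b : ℝ, (Complex.I * theta z₀ (((a : ℝ) : ℂ) + ((b : ℝ) : ℂ) * Complex.I)).re
      = -16*(5*a^4*b - 10*a^2*b^3 + b^5) + 80*z₀^4*b := by
    intro a b
    simp only [theta]
    simp [Complex.mul_re, Complex.mul_im, Complex.add_re, Complex.add_im, Complex.sub_re,
      Complex.sub_im, pow_succ, Complex.I_re, Complex.I_im, Complex.ofReal_re, Complex.ofReal_im]
    ring
  rw [hre]
  have h2 : Real.sin (2*α) = 2*Real.sin α*Real.cos α := Real.sin_two_mul α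
  have h3 : Real.sin (3*α) = 3*Real.sin α - 4*Real.sin α^3 := Real.sin_three_mul α
  have h4 : Real.sin (4*α) = 4*Real.sin α*Real.cos α*(2*Real.cos α^2-1) := by
    have e : (4:ℝ)*α = 2*(2*α) := by ring
    rw [e, Real.sin_two_mul, Real.sin_two_mul, Real.cos_two_mul]; ring
  have h5 : Real.sin (5*α) = 2*Real.sin α*Real.cos α*(4*Real.cos α^3-3*Real.cos α)
      + (2*Real.cos α^2-1)*(3*Real.sin α-4*Real.sin α^3) := by
    have e : (5:ℝ)*α = 2*α + 3*α := by ring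
    rw [e, Real.sin_add, Real.sin_two_mul, Real.cos_two_mul, Real.sin_three_mul,
      Real.cos_three_mul]
  rw [h2, h3, h4, h5]
  linear_combination (-480*Real.sin α*u^3*z₀^5 + 48*Real.sin α*u^5*z₀^5
    - 320*Real.sin α*Real.cos α*u^4*z₀^5 + 48*Real.sin α*Real.cos α^2*u^5*z₀^5
    - 16*Real.sin α^3*u^5*z₀^5) * (Real.sin_sq_add_cos_sq α)

/-- For all sufficiently small `α > 0`, the constant `c(α)` is positive, the polynomial
`u ↦ 10 sin 2α − 10 u sin 3α + 5 u² sin 4α − u³ sin 5α` is monotonically decreasing on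
`[0, 1/cos α]` and bounded below there by `c(α)`; consequently, on the ray
`z = z₀ + u z₀ e^{i(π−α)}` one has `Re(iθ(z)) ≥ 16 c(α) z₀^5 u²`. -/
theorem c_alpha_positive_and_lower_bound :
    ∃ α₀ ∈ Set.Ioc (0 : ℝ) (Real.pi / 4), ∀ α ∈ Set.Ioc (0 : ℝ) α₀,
      0 < cα α ∧
      AntitoneOn
        (fun u : ℝ => 10 * Real.sin (2 * α) - 10 * u * Real.sin (3 * α)
          + 5 * u ^ 2 * Real.sin (4 * α) - u ^ 3 * Real.sin (5 * α))
        (Set.Icc 0 (1 / Real.cos α)) ∧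
      (∀ u ∈ Set.Icc (0 : ℝ) (1 / Real.cos α),
        10 * Real.sin (2 * α) - 10 * u * Real.sin (3 * α)
          + 5 * u ^ 2 * Real.sin (4 * α) - u ^ 3 * Real.sin (5 * α) ≥ cα α) ∧
      ∀ z₀ : ℝ, 0 < z₀ → ∀ u ∈ Set.Icc (0 : ℝ) (1 / Real.cos α),
        (Complex.I *
            theta z₀ ((z₀ : ℂ) + (u : ℂ) * (z₀ : ℂ) *
              Complex.exp (Complex.I * ((Real.pi : ℂ) - (α : ℂ))))).re
          ≥ 16 * cα α * z₀ ^ 5 * u ^ 2 := by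
  refine ⟨1/10, ⟨by norm_num, by nlinarith [Real.pi_gt_three]⟩, ?_⟩
  rintro α ⟨h0, h1⟩
  have hcl : 1 - α^2/2 ≤ Real.cos α := Real.one_sub_sq_div_two_le_cos
  have hcpos : (0:ℝ) < Real.cos α := by nlinarith
  have hcne : Real.cos α ≠ 0 := ne_of_gt hcpos
  have hP := aux_P_pos α h0 h1
  -- cα as value of the cubic at 1/cos α
  have hval : cα α * Real.cos α ^ 3
      = 10 * Real.cos α ^3 * Real.sin (2*α) - 10 * Real.cos α ^2 * Real.sin (3*α)
        + 5 * Real.cos α * Real.sin (4*α) - Real.sin (5*α) := by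
    rw [cα]; field_simp
  have hcαpos : 0 < cα α := by nlinarith [pow_pos hcpos 3]
  -- antitonicity
  have hanti : AntitoneOn
      (fun u : ℝ => 10 * Real.sin (2 * α) - 10 * u * Real.sin (3 * α)
        + 5 * u ^ 2 * Real.sin (4 * α) - u ^ 3 * Real.sin (5 * α))
      (Set.Icc 0 (1 / Real.cos α)) := by
    rintro u ⟨hu0, _⟩ v ⟨hv0, _⟩ huv
    have hbr := aux_bracket α u v h0 h1 hu0 hv0
    have hprod : 0 ≤ (v - u) * (10 * Real.sin (3*α) - 5*(u+v) * Real.sin (4*α)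
        + (u^2+u*v+v^2) * Real.sin (5*α)) := mul_nonneg (by linarith) hbr
    simp only
    nlinarith [hprod]
  -- lower bound by cα
  have hmem : 1 / Real.cos α ∈ Set.Icc (0:ℝ) (1 / Real.cos α) :=
    ⟨by positivity, le_refl _⟩
  have hend : (10 * Real.sin (2 * α) - 10 * (1/Real.cos α) * Real.sin (3 * α)
      + 5 * (1/Real.cos α) ^ 2 * Real.sin (4 * α) - (1/Real.cos α) ^ 3 * Real.sin (5 * α))
      = cα α := by
    rw [cα]; field_simp
  have hlow : ∀ u ∈ Set.Icc (0 : ℝ) (1 / Real.cos α),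
      10 * Real.sin (2 * α) - 10 * u * Real.sin (3 * α)
        + 5 * u ^ 2 * Real.sin (4 * α) - u ^ 3 * Real.sin (5 * α) ≥ cα α := by
    intro u hu
    have := hanti hu hmem hu.2
    simp only at this
    linarith [this, hend.ge]
  refine ⟨hcαpos, hanti, hlow, ?_⟩
  intro z₀ hz₀ u hu
  rw [ge_iff_le, aux_re_eq α z₀ u]
  have h16 : (0:ℝ) ≤ 16 * z₀^5 * u^2 := by positivity
  have := mul_le_mul_of_nonneg_left (hlow u hu) h16
  nlinarith [this]
end

section
/- Let z_0 > 0, α ∈ (0, π/5) and v ≥ 0, and set z = z_0 + v z_0 e^{−iα}. Then Re(i θ(z)) = 160 z_0^5 v^2 ( sin(2α) + v sin(3α) + (1/2) v^2 sin(4α) + (1/10) v^3 sin(5α) ), and in particular Re(i θ(z)) ≥ 160 sin(2α) z_0^5 v^2 ≥ 0. -/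
/-- On the ray `z = z₀ + v z₀ e^{−iα}` with `α ∈ (0, π/5)` and `v ≥ 0`, one has the exact
identity `Re(iθ(z)) = 160 z₀^5 v² (sin 2α + v sin 3α + (1/2) v² sin 4α + (1/10) v³ sin 5α)`,
and in particular `Re(iθ(z)) ≥ 160 sin(2α) z₀^5 v² ≥ 0`. -/
theorem re_I_theta_on_conjugate_ray (z₀ : ℝ) (hz₀ : 0 < z₀) (α : ℝ)
    (hα : α ∈ Set.Ioo 0 (Real.pi / 5)) (v : ℝ) (hv : 0 ≤ v) :
    (Complex.I *
        theta z₀ ((z₀ : ℂ) + (v : ℂ) * (z₀ : ℂ) * Complex.exp (-Complex.I * (α : ℂ)))).re =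
      160 * z₀ ^ 5 * v ^ 2 *
        (Real.sin (2 * α) + v * Real.sin (3 * α) + (1 / 2) * v ^ 2 * Real.sin (4 * α)
          + (1 / 10) * v ^ 3 * Real.sin (5 * α)) ∧
    (Complex.I *
        theta z₀ ((z₀ : ℂ) + (v : ℂ) * (z₀ : ℂ) * Complex.exp (-Complex.I * (α : ℂ)))).re ≥
      160 * Real.sin (2 * α) * z₀ ^ 5 * v ^ 2 ∧
    (0 : ℝ) ≤ 160 * Real.sin (2 * α) * z₀ ^ 5 * v ^ 2 := by
  obtain ⟨hα0, hα5⟩ := hα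
  have hpi : 0 < Real.pi := Real.pi_pos
  set s := Real.sin α with hs
  set c := Real.cos α with hc
  have hexp : Complex.exp (-Complex.I * (α : ℂ)) = (c : ℂ) - (s : ℂ) * Complex.I := by
    rw [show -Complex.I * (α : ℂ) = ((-α : ℝ) : ℂ) * Complex.I by push_cast; ring,
      Complex.exp_mul_I]
    simp only [hs, hc, Complex.ofReal_cos, Complex.ofReal_sin, Complex.ofReal_neg,
      Complex.cos_neg, Complex.sin_neg]
    ring
  have s2 : Real.sin (2 * α) = 2 * s * c := Real.sin_two_mul α
  have c2 : Real.cos (2 * α) = c ^ 2 - s ^ 2 := Real.cos_two_mul' α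
  have s3 : Real.sin (3 * α) = 3 * s * c ^ 2 - s ^ 3 := by
    rw [show (3 : ℝ) * α = 2 * α + α by ring, Real.sin_add, s2, c2]; ring
  have c3 : Real.cos (3 * α) = c ^ 3 - 3 * s ^ 2 * c := by
    rw [show (3 : ℝ) * α = 2 * α + α by ring, Real.cos_add, s2, c2]; ring
  have s4 : Real.sin (4 * α) = 4 * s * c ^ 3 - 4 * s ^ 3 * c := by
    rw [show (4 : ℝ) * α = 3 * α + α by ring, Real.sin_add, s3, c3]; ring
  have c4 : Real.cos (4 * α) = c ^ 4 - 6 * s ^ 2 * c ^ 2 + s ^ 4 := by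
    rw [show (4 : ℝ) * α = 3 * α + α by ring, Real.cos_add, s3, c3]; ring
  have s5 : Real.sin (5 * α) = 5 * s * c ^ 4 - 10 * s ^ 3 * c ^ 2 + s ^ 5 := by
    rw [show (5 : ℝ) * α = 4 * α + α by ring, Real.sin_add, s4, c4]; ring
  have hid : (Complex.I *
        theta z₀ ((z₀ : ℂ) + (v : ℂ) * (z₀ : ℂ) * Complex.exp (-Complex.I * (α : ℂ)))).re =
      160 * z₀ ^ 5 * v ^ 2 *
        (Real.sin (2 * α) + v * Real.sin (3 * α) + (1 / 2) * v ^ 2 * Real.sin (4 * α)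
          + (1 / 10) * v ^ 3 * Real.sin (5 * α)) := by
    rw [s2, s3, s4, s5]
    simp only [theta, hexp]
    simp only [Complex.mul_re, Complex.mul_im, Complex.add_re, Complex.add_im, Complex.sub_re,
      Complex.sub_im, Complex.I_re, Complex.I_im, Complex.ofReal_re, Complex.ofReal_im,
      Complex.re_ofNat, Complex.im_ofNat, pow_succ, pow_zero, one_mul]
    ring
  have h3 : 0 ≤ Real.sin (3 * α) := by
    apply Real.sin_nonneg_of_nonneg_of_le_pi <;> linarith
  have h4 : 0 ≤ Real.sin (4 * α) := by
    apply Real.sin_nonneg_of_nonneg_of_le_pi <;> linarith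
  have h5 : 0 ≤ Real.sin (5 * α) := by
    apply Real.sin_nonneg_of_nonneg_of_le_pi <;> linarith
  have h2 : 0 ≤ Real.sin (2 * α) := by
    apply Real.sin_nonneg_of_nonneg_of_le_pi <;> linarith
  have hz5 : (0:ℝ) ≤ z₀ ^ 5 := by positivity
  refine ⟨hid, ?_, by positivity⟩
  rw [hid, ge_iff_le,
    show 160 * Real.sin (2 * α) * z₀ ^ 5 * v ^ 2
        = 160 * z₀ ^ 5 * v ^ 2 * Real.sin (2 * α) by ring]
  have hcoef : (0:ℝ) ≤ 160 * z₀ ^ 5 * v ^ 2 := by positivity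
  apply mul_le_mul_of_nonneg_left ?_ hcoef
  have t3 : 0 ≤ v * Real.sin (3 * α) := mul_nonneg hv h3
  have t4 : 0 ≤ (1/2) * v ^ 2 * Real.sin (4 * α) := by
    apply mul_nonneg (by positivity) h4
  have t5 : 0 ≤ (1/10) * v ^ 3 * Real.sin (5 * α) := by
    apply mul_nonneg (by positivity) h5
  linarith
end

section
/- Let ν > 0, α ∈ (0, π/2), γ ∈ (0, 1/2), ε ∈ (0, 1), z_0 > 0, t > 0 and a = (640 t z_0^3)^{1/2}. Then there is a constant C depending only on ν, α, γ, ε and z_0 such that for every u ≥ −ε, with z = u z_0 a e^{iα} and using the principal branch of the complex power: | e^{i γ z^2/2} ( (2z_0/(z/a + 2z_0))^{−2iν} − 1 ) | ≤ C t^{−1/2}. -/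
private lemma aux_mul_exp (y : ℝ) (hy : 0 ≤ y) : y * Real.exp (-(y^2)) ≤ 1 := by
  rw [Real.exp_neg]
  rw [mul_inv_le_iff₀ (Real.exp_pos _), one_mul]
  nlinarith [Real.add_one_le_exp (y^2)]

private lemma aux_exp_le (x : ℝ) (hx : 0 < x) : Real.exp (-x) ≤ (Real.sqrt x)⁻¹ := by
  rw [Real.exp_neg, inv_le_inv₀ (Real.exp_pos _) (Real.sqrt_pos.2 hx)]
  nlinarith [Real.add_one_le_exp x, Real.sq_sqrt hx.le, Real.sqrt_nonneg x, Real.exp_pos x]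

private lemma aux_log (w : ℂ) (h : ‖w - 1‖ ≤ 1/2) : ‖Complex.log w‖ ≤ 2 * ‖w - 1‖ := by
  have := Complex.norm_log_one_add_half_le_self (z := w - 1) h
  rw [add_sub_cancel] at this
  nlinarith [norm_nonneg (w - 1)]

private lemma aux_re (γ c β : ℝ) :
    (Complex.I * (γ:ℂ) * (((c:ℝ):ℂ) * Complex.exp (Complex.I * (β:ℂ))) ^ 2 / 2).re
      = -(γ * c ^ 2 * Real.sin (2 * β)) / 2 := by
  have h2 : Complex.exp (Complex.I * (β:ℂ)) ^ 2 = Complex.exp (Complex.I * ((2*β : ℝ):ℂ)) := by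
    rw [← Complex.exp_nat_mul]; push_cast; ring_nf
  rw [mul_pow, h2]
  simp [Complex.exp_re, Complex.exp_im, Complex.mul_re, Complex.mul_im, Complex.div_re,
    Complex.normSq_apply, ← Complex.ofReal_pow]
  ring_nf

set_option maxHeartbeats 1000000 in
/-- For `z = u z₀ a e^{iα}` with `u ≥ −ε` and `a = (640 t z₀³)^{1/2}`, the quantity
`|e^{iγz²/2}((2z₀/(z/a + 2z₀))^{−2iν} − 1)|` is bounded by `C t^{−1/2}`, where `C`
depends only on `ν, α, γ, ε, z₀` (principal branch of the complex power). -/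
theorem power_term_bound (ν α γ ε z₀ : ℝ) (hν : 0 < ν)
    (hα : α ∈ Set.Ioo 0 (Real.pi / 2)) (hγ : γ ∈ Set.Ioo (0 : ℝ) (1 / 2))
    (hε : ε ∈ Set.Ioo (0 : ℝ) 1) (hz₀ : 0 < z₀) :
    ∃ C > (0 : ℝ), ∀ t : ℝ, 0 < t → ∀ u : ℝ, -ε ≤ u →
      ‖Complex.exp (Complex.I * (γ : ℂ) *
            ((u : ℂ) * (z₀ : ℂ) * (Real.sqrt (640 * t * z₀ ^ 3) : ℂ) *
              Complex.exp (Complex.I * (α : ℂ))) ^ 2 / 2) *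
          (((2 * (z₀ : ℂ)) /
              (((u : ℂ) * (z₀ : ℂ) * (Real.sqrt (640 * t * z₀ ^ 3) : ℂ) *
                  Complex.exp (Complex.I * (α : ℂ))) / (Real.sqrt (640 * t * z₀ ^ 3) : ℂ)
                + 2 * (z₀ : ℂ))) ^ (-2 * Complex.I * (ν : ℂ)) - 1)‖
        ≤ C * t ^ (-(1 : ℝ) / 2) := by

  obtain ⟨hα0, hα2⟩ := hα
  obtain ⟨hγ0, hγ2⟩ := hγ
  obtain ⟨hε0, hε1⟩ := hε
  have hsin2 : 0 < Real.sin (2 * α) := by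
    apply Real.sin_pos_of_pos_of_lt_pi <;> nlinarith [Real.pi_pos]
  -- constants
  set K : ℝ := 320 * γ * Real.sin (2 * α) * z₀ ^ 5 with hKdef
  have hK : 0 < K := by positivity
  set δ : ℝ := min (1/2) (1/(4*ν+1)) with hδdef
  have hδ0 : 0 < δ := by
    apply lt_min (by norm_num); positivity
  have hδhalf : δ ≤ 1/2 := min_le_left _ _
  have hδν : 4 * ν * δ ≤ 1 := by
    have h1 : δ ≤ 1/(4*ν+1) := min_le_right _ _
    rw [le_div_iff₀ (by positivity)] at h1
    nlinarith
  set M : ℝ := Real.exp (2 * Real.pi * ν) + 1 with hMdef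
  have hM : 0 < M := by positivity
  refine ⟨8*ν/Real.sqrt K + M/(δ * Real.sqrt K), by positivity, ?_⟩
  intro t ht u hu
  have hu1 : -1 ≤ u := by linarith
  set a : ℝ := Real.sqrt (640 * t * z₀ ^ 3) with hadef
  have ha0 : 0 < a := Real.sqrt_pos.2 (by positivity)
  have ha2 : a ^ 2 = 640 * t * z₀ ^ 3 := Real.sq_sqrt (by positivity)
  set e : ℂ := Complex.exp (Complex.I * (α:ℂ)) with hedef
  have hecard : ‖e‖ = 1 := by
    rw [hedef, Complex.norm_exp]
    simp
  set d : ℂ := (u:ℂ) * e + 2 with hddef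
  -- ‖d‖ ≥ 1
  have hdre : d.re = u * Real.cos α + 2 := by
    simp [hddef, hedef, Complex.exp_re, Complex.mul_re, Complex.mul_im]
  have hdim : d.im = u * Real.sin α := by
    simp [hddef, hedef, Complex.exp_im, Complex.mul_re, Complex.mul_im]
  have hcos1 : Real.cos α ≤ 1 := Real.cos_le_one α
  have hcos0 : 0 ≤ Real.cos α := Real.cos_nonneg_of_mem_Icc ⟨by linarith, le_of_lt hα2⟩
  have hd1 : 1 ≤ ‖d‖ := by
    have hsq : 1 ≤ ‖d‖ ^ 2 := by
      rw [Complex.sq_norm, Complex.normSq_apply, hdre, hdim]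
      nlinarith [mul_nonneg (by linarith : (0:ℝ) ≤ u + 1) hcos0, sq_nonneg (u * Real.sin α)]
    nlinarith [norm_nonneg d]
  have hd0 : d ≠ 0 := by
    intro h; rw [h] at hd1; simp at hd1; linarith
  -- simplify the base of the power
  set w : ℂ := 2 / d with hwdef
  have hw0 : w ≠ 0 := by
    rw [hwdef]; exact div_ne_zero two_ne_zero hd0
  have hbase : (2 * (z₀:ℂ)) /
      (((u : ℂ) * (z₀ : ℂ) * (a : ℂ) * e) / (a : ℂ) + 2 * (z₀ : ℂ)) = w := by
    have haC : (a:ℂ) ≠ 0 := by exact_mod_cast ha0.ne'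
    have hz₀C : (z₀:ℂ) ≠ 0 := by exact_mod_cast hz₀.ne'
    rw [hwdef, hddef]
    have h1 : ((u:ℂ) * (z₀:ℂ) * (a:ℂ) * e) / (a:ℂ) = (z₀:ℂ) * ((u:ℂ) * e) := by
      field_simp
    rw [h1, show (z₀:ℂ) * ((u:ℂ) * e) + 2 * (z₀:ℂ) = (z₀:ℂ) * ((u:ℂ) * e + 2) by ring,
      show (2 * (z₀:ℂ)) = (z₀:ℂ) * 2 by ring, mul_div_mul_left _ _ hz₀C]
  -- ‖w - 1‖ ≤ |u|
  have hw1 : ‖w - 1‖ ≤ |u| := by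
    have : w - 1 = -((u:ℂ) * e) / d := by
      rw [hwdef, div_sub_one hd0, hddef]; ring
    rw [this, norm_div, norm_neg, norm_mul, hecard, mul_one]
    rw [div_le_iff₀ (by linarith)]
    have : ‖(u:ℂ)‖ = |u| := by simp
    nlinarith [abs_nonneg u, this.le, this.ge]
  -- the power as exp
  have hpow : w ^ (-2 * Complex.I * (ν:ℂ)) =
      Complex.exp (Complex.log w * (-2 * Complex.I * (ν:ℂ))) :=
    Complex.cpow_def_of_ne_zero hw0 _
  -- norm of the exponential prefactor
  have hEnorm : ‖Complex.exp (Complex.I * (γ : ℂ) *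
      ((u : ℂ) * (z₀ : ℂ) * (a : ℂ) * e) ^ 2 / 2)‖ = Real.exp (-(K * t * u^2)) := by
    rw [Complex.norm_exp]
    congr 1
    have : (u : ℂ) * (z₀ : ℂ) * (a : ℂ) * e = (((u * z₀ * a : ℝ)):ℂ) * e := by push_cast; ring
    rw [this, hedef, aux_re γ (u * z₀ * a) α]
    rw [hKdef]
    have : (u * z₀ * a)^2 = u^2 * z₀^2 * a^2 := by ring
    rw [this, ha2]; ring
  rw [hbase, hpow, norm_mul, hEnorm]
  -- t^(-1/2)
  have htpow : t ^ (-(1:ℝ)/2) = (Real.sqrt t)⁻¹ := by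
    rw [show (-(1:ℝ)/2) = -(1/2) by ring, Real.rpow_neg ht.le, Real.sqrt_eq_rpow]
  have hsqrtK : 0 < Real.sqrt K := Real.sqrt_pos.2 hK
  have hsqrtt : 0 < Real.sqrt t := Real.sqrt_pos.2 ht
  have hsqrtKt : Real.sqrt (K * t) = Real.sqrt K * Real.sqrt t := Real.sqrt_mul hK.le t
  rcases le_or_gt |u| δ with hcase | hcase
  · -- small u
    have hwu : ‖w - 1‖ ≤ 1/2 := le_trans hw1 (le_trans hcase hδhalf)
    have hlog : ‖Complex.log w‖ ≤ 2 * |u| := le_trans (aux_log w hwu) (by linarith)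
    have hargn : ‖Complex.log w * (-2 * Complex.I * (ν:ℂ))‖ = ‖Complex.log w‖ * (2 * ν) := by
      rw [norm_mul]
      congr 1
      simp [norm_mul, abs_of_pos hν]
    have harg1 : ‖Complex.log w * (-2 * Complex.I * (ν:ℂ))‖ ≤ 1 := by
      rw [hargn]
      calc ‖Complex.log w‖ * (2 * ν) ≤ (2 * |u|) * (2 * ν) := by
            apply mul_le_mul_of_nonneg_right hlog (by positivity)
        _ ≤ 1 := by nlinarith [abs_nonneg u]
    have hdiff : ‖Complex.exp (Complex.log w * (-2 * Complex.I * (ν:ℂ))) - 1‖ ≤ 8 * ν * |u| := by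
      calc ‖Complex.exp (Complex.log w * (-2 * Complex.I * (ν:ℂ))) - 1‖
          ≤ 2 * ‖Complex.log w * (-2 * Complex.I * (ν:ℂ))‖ :=
            by exact Complex.norm_exp_sub_one_le harg1
        _ = 2 * (‖Complex.log w‖ * (2 * ν)) := by rw [hargn]
        _ ≤ 2 * ((2 * |u|) * (2 * ν)) := by
            apply mul_le_mul_of_nonneg_left _ (by norm_num)
            apply mul_le_mul_of_nonneg_right hlog (by positivity)
        _ = 8 * ν * |u| := by ring
    calc Real.exp (-(K * t * u^2)) * ‖Complex.exp (Complex.log w * (-2 * Complex.I * (ν:ℂ))) - 1‖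
        ≤ Real.exp (-(K * t * u^2)) * (8 * ν * |u|) := by
          apply mul_le_mul_of_nonneg_left hdiff (Real.exp_pos _).le
      _ = 8 * ν * (|u| * Real.exp (-(K * t * u^2))) := by ring
      _ ≤ 8 * ν * (Real.sqrt (K * t))⁻¹ := by
          apply mul_le_mul_of_nonneg_left _ (by positivity)
          have key := aux_mul_exp (Real.sqrt (K * t) * |u|) (by positivity)
          have hsq : (Real.sqrt (K * t) * |u|)^2 = K * t * u^2 := by
            rw [mul_pow, Real.sq_sqrt (by positivity), sq_abs]
          rw [hsq] at key
          rw [inv_eq_one_div, le_div_iff₀ (by rw [hsqrtKt]; positivity)]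
          nlinarith [Real.exp_pos (-(K * t * u^2))]
      _ ≤ (8*ν/Real.sqrt K + M/(δ * Real.sqrt K)) * t ^ (-(1:ℝ)/2) := by
          rw [htpow, hsqrtKt, mul_inv]
          have h1 : 8 * ν * ((Real.sqrt K)⁻¹ * (Real.sqrt t)⁻¹)
              = (8*ν/Real.sqrt K) * (Real.sqrt t)⁻¹ := by ring
          rw [h1]
          apply mul_le_mul_of_nonneg_right _ (by positivity)
          have : 0 < M/(δ * Real.sqrt K) := by positivity
          linarith
  · -- large u
    have hM2 : ‖Complex.exp (Complex.log w * (-2 * Complex.I * (ν:ℂ))) - 1‖ ≤ M := by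
      have hnorm : ‖Complex.exp (Complex.log w * (-2 * Complex.I * (ν:ℂ)))‖
          ≤ Real.exp (2 * Real.pi * ν) := by
        rw [Complex.norm_exp]
        apply Real.exp_le_exp.2
        have hre : (Complex.log w * (-2 * Complex.I * (ν:ℂ))).re
            = 2 * ν * (Complex.log w).im := by
          simp [Complex.mul_re, Complex.mul_im]
          ring
        rw [hre]
        have harg : (Complex.log w).im = Complex.arg w := Complex.log_im w
        have := Complex.abs_arg_le_pi w
        rw [harg]
        have h1 : Complex.arg w ≤ Real.pi := (abs_le.1 this).2
        nlinarith
      calc ‖Complex.exp (Complex.log w * (-2 * Complex.I * (ν:ℂ))) - 1‖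
          ≤ ‖Complex.exp (Complex.log w * (-2 * Complex.I * (ν:ℂ)))‖ + ‖(1:ℂ)‖ :=
            norm_sub_le _ _
        _ ≤ Real.exp (2 * Real.pi * ν) + 1 := by rw [norm_one]; linarith
        _ = M := rfl
    have hexp : Real.exp (-(K * t * u^2)) ≤ (δ * Real.sqrt (K * t))⁻¹ := by
      calc Real.exp (-(K * t * u^2)) ≤ Real.exp (-(K * t * δ^2)) := by
            apply Real.exp_le_exp.2
            have h2 : δ^2 ≤ u^2 := by nlinarith [sq_abs u, abs_nonneg u]
            nlinarith [mul_le_mul_of_nonneg_left h2 (mul_pos hK ht).le]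
        _ ≤ (Real.sqrt (K * t * δ^2))⁻¹ := aux_exp_le _ (by positivity)
        _ = (δ * Real.sqrt (K * t))⁻¹ := by
            rw [show K * t * δ^2 = δ^2 * (K * t) by ring, Real.sqrt_mul (by positivity),
              Real.sqrt_sq hδ0.le]
    calc Real.exp (-(K * t * u^2)) * ‖Complex.exp (Complex.log w * (-2 * Complex.I * (ν:ℂ))) - 1‖
        ≤ (δ * Real.sqrt (K * t))⁻¹ * M := by
          apply mul_le_mul hexp hM2 (norm_nonneg _) (by positivity)
      _ ≤ (8*ν/Real.sqrt K + M/(δ * Real.sqrt K)) * t ^ (-(1:ℝ)/2) := by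
          rw [htpow, hsqrtKt]
          have h1 : (δ * (Real.sqrt K * Real.sqrt t))⁻¹ * M
              = (M/(δ * Real.sqrt K)) * (Real.sqrt t)⁻¹ := by
            rw [show δ * (Real.sqrt K * Real.sqrt t) = (δ * Real.sqrt K) * Real.sqrt t by ring,
              mul_inv, div_eq_mul_inv]; ring
          rw [h1]
          apply mul_le_mul_of_nonneg_right _ (by positivity)
          have : 0 < 8*ν/Real.sqrt K := by positivity
          linarith
end

section
/- For every α ∈ (0, π/5) and γ ∈ (0, 1/2) there exists ε_0 > 0 such that for all z_0 > 0, a > 0 and all real u ≥ −ε_0, setting z = u z_0 a e^{iα} and ξ(z) = 1 + (1−2γ)^{−1} ( z/(a z_0) + z^2/(2 a^2 z_0^2) + z^3/(10 a^3 z_0^3) ), one has Re( i (1−2γ) (z^2/2) ξ(z) ) ≤ 0, and consequently | exp( i (1−2γ) (z^2/2) ξ(z) ) | ≤ 1. -/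
lemma bracket_nonneg_aux (β s2 s3 s4 s5 u : ℝ) (hβ : 0 < β) (hs2 : 0 < s2)
    (hs3 : 0 < s3) (hs4 : 0 < s4) (hs5 : 0 < s5) (hs3le : s3 ≤ 1) (hs5le : s5 ≤ 1)
    (hu : -min (β*s2/2) 1 ≤ u) :
    0 ≤ β*u^2 * s2 + u^3 * s3 + u^4/2 * s4 + u^5/10 * s5 := by
  rcases le_or_gt 0 u with hu0 | hu0
  · have k1 : (0:ℝ) ≤ β*u^2*s2 := mul_nonneg (mul_nonneg hβ.le (sq_nonneg u)) hs2.le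
    have k2 : (0:ℝ) ≤ u^3*s3 := mul_nonneg (pow_nonneg hu0 3) hs3.le
    have k3 : (0:ℝ) ≤ u^4/2*s4 := mul_nonneg (by positivity) hs4.le
    have k4 : (0:ℝ) ≤ u^5/10*s5 := mul_nonneg (div_nonneg (pow_nonneg hu0 5) (by norm_num)) hs5.le
    linarith
  · have hmin : -u ≤ min (β*s2/2) 1 := by linarith
    have hε1 : -u ≤ β*s2/2 := hmin.trans (min_le_left _ _)
    have hε2 : -u ≤ 1 := hmin.trans (min_le_right _ _)
    have hnu : (0:ℝ) ≤ -u := by linarith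
    have h1u2 : (0:ℝ) ≤ 1 - u^2 := by nlinarith
    have hu3 : u ≤ u^3 := by nlinarith [mul_nonneg hnu h1u2]
    have hu30 : u^3 ≤ 0 := by nlinarith [mul_nonneg (mul_nonneg hnu hnu) hnu]
    have t3 : u ≤ u*s3 := by nlinarith
    have t5 : u^3 ≤ u^3*s5 := by nlinarith
    have t4 : (0:ℝ) ≤ u^2/2*s4 := mul_nonneg (by positivity) hs4.le
    have hB : 0 ≤ β*s2 + u * s3 + u^2/2 * s4 + u^3/10 * s5 := by
      have hbig : β*s2 ≥ 0 := mul_nonneg hβ.le hs2.le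
      linarith
    have heq : β*u^2 * s2 + u^3 * s3 + u^4/2 * s4 + u^5/10 * s5
        = u^2 * (β*s2 + u * s3 + u^2/2 * s4 + u^3/10 * s5) := by ring
    rw [heq]
    exact mul_nonneg (sq_nonneg u) hB

/-- For `α ∈ (0, π/5)` and `γ ∈ (0, 1/2)` there is `ε₀ > 0` such that for all `z₀, a > 0`
and `u ≥ −ε₀`, with `z = u z₀ a e^{iα}` and
`ξ(z) = 1 + (1−2γ)⁻¹(z/(az₀) + z²/(2a²z₀²) + z³/(10a³z₀³))`, one has
`Re(i(1−2γ)(z²/2)ξ(z)) ≤ 0` and hence `|exp(i(1−2γ)(z²/2)ξ(z))| ≤ 1`. -/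
theorem xi_exponent_bound (α γ : ℝ) (hα : α ∈ Set.Ioo 0 (Real.pi / 5))
    (hγ : γ ∈ Set.Ioo (0 : ℝ) (1 / 2)) :
    ∃ ε₀ > (0 : ℝ), ∀ (z₀ a : ℝ), 0 < z₀ → 0 < a → ∀ u : ℝ, -ε₀ ≤ u →
      (Complex.I * ((1 : ℂ) - 2 * (γ : ℂ)) *
          (((u : ℂ) * (z₀ : ℂ) * (a : ℂ) * Complex.exp (Complex.I * (α : ℂ))) ^ 2 / 2) *
          (1 + ((1 : ℂ) - 2 * (γ : ℂ))⁻¹ *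
            (((u : ℂ) * (z₀ : ℂ) * (a : ℂ) * Complex.exp (Complex.I * (α : ℂ))) / ((a : ℂ) * (z₀ : ℂ))
              + ((u : ℂ) * (z₀ : ℂ) * (a : ℂ) * Complex.exp (Complex.I * (α : ℂ))) ^ 2 /
                  (2 * (a : ℂ) ^ 2 * (z₀ : ℂ) ^ 2)
              + ((u : ℂ) * (z₀ : ℂ) * (a : ℂ) * Complex.exp (Complex.I * (α : ℂ))) ^ 3 /
                  (10 * (a : ℂ) ^ 3 * (z₀ : ℂ) ^ 3)))).re ≤ 0 ∧
      ‖Complex.exp (Complex.I * ((1 : ℂ) - 2 * (γ : ℂ)) *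
          (((u : ℂ) * (z₀ : ℂ) * (a : ℂ) * Complex.exp (Complex.I * (α : ℂ))) ^ 2 / 2) *
          (1 + ((1 : ℂ) - 2 * (γ : ℂ))⁻¹ *
            (((u : ℂ) * (z₀ : ℂ) * (a : ℂ) * Complex.exp (Complex.I * (α : ℂ))) / ((a : ℂ) * (z₀ : ℂ))
              + ((u : ℂ) * (z₀ : ℂ) * (a : ℂ) * Complex.exp (Complex.I * (α : ℂ))) ^ 2 /
                  (2 * (a : ℂ) ^ 2 * (z₀ : ℂ) ^ 2)
              + ((u : ℂ) * (z₀ : ℂ) * (a : ℂ) * Complex.exp (Complex.I * (α : ℂ))) ^ 3 /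
                  (10 * (a : ℂ) ^ 3 * (z₀ : ℂ) ^ 3))))‖ ≤ 1 := by
  obtain ⟨hα0, hα5⟩ := hα
  obtain ⟨hγ0, hγ2⟩ := hγ
  have hπ : 0 < Real.pi := Real.pi_pos
  have hβ : (0:ℝ) < 1 - 2*γ := by linarith
  have hsin : ∀ n : ℕ, 2 ≤ n → n ≤ 5 → 0 < Real.sin (n * α) := by
    intro n h2 h5
    apply Real.sin_pos_of_pos_of_lt_pi
    · have : (0:ℝ) < (n:ℝ) := by positivity
      positivity
    · have hn5 : (n:ℝ) ≤ 5 := by exact_mod_cast h5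
      have : (n:ℝ) * α ≤ 5 * α := by nlinarith
      nlinarith
  have hs2 := hsin 2 le_rfl (by norm_num)
  have hs3 := hsin 3 (by norm_num) (by norm_num)
  have hs4 := hsin 4 (by norm_num) (by norm_num)
  have hs5 := hsin 5 (by norm_num) le_rfl
  push_cast at hs2 hs3 hs4 hs5
  refine ⟨min ((1-2*γ)*Real.sin (2*α)/2) 1,
    lt_min (div_pos (mul_pos hβ hs2) two_pos) one_pos, ?_⟩
  intro z₀ a hz₀ ha u hu
  set e : ℂ := Complex.exp (Complex.I * (α:ℂ)) with he
  have hek : ∀ n : ℕ, (e ^ n).im = Real.sin (n * α) := by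
    intro n
    have h1 : e ^ n = Complex.exp (((n*α : ℝ) : ℂ) * Complex.I) := by
      rw [he, ← Complex.exp_nat_mul]
      congr 1
      push_cast
      ring
    rw [h1, Complex.exp_ofReal_mul_I_im]
  have hβc : ((1:ℂ) - 2*(γ:ℂ)) ≠ 0 := by
    intro h
    have := congrArg Complex.re h
    simp at this
    linarith
  have hac : ((a:ℂ)) ≠ 0 := Complex.ofReal_ne_zero.mpr ha.ne'
  have hzc : ((z₀:ℂ)) ≠ 0 := Complex.ofReal_ne_zero.mpr hz₀.ne'
  have e1 : ((u:ℂ) * z₀ * a * e) / ((a:ℂ) * z₀) = (u:ℂ) * e := by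
    field_simp
  have e2 : ((u:ℂ) * z₀ * a * e) ^ 2 / (2 * (a:ℂ)^2 * (z₀:ℂ)^2) = (u:ℂ)^2 * e^2 / 2 := by
    field_simp
  have e3 : ((u:ℂ) * z₀ * a * e) ^ 3 / (10 * (a:ℂ)^3 * (z₀:ℂ)^3) = (u:ℂ)^3 * e^3 / 10 := by
    field_simp
  have key : (Complex.I * ((1 : ℂ) - 2 * (γ : ℂ)) *
          (((u : ℂ) * (z₀ : ℂ) * (a : ℂ) * e) ^ 2 / 2) *
          (1 + ((1 : ℂ) - 2 * (γ : ℂ))⁻¹ *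
            (((u : ℂ) * (z₀ : ℂ) * (a : ℂ) * e) / ((a : ℂ) * (z₀ : ℂ))
              + ((u : ℂ) * (z₀ : ℂ) * (a : ℂ) * e) ^ 2 / (2 * (a : ℂ) ^ 2 * (z₀ : ℂ) ^ 2)
              + ((u : ℂ) * (z₀ : ℂ) * (a : ℂ) * e) ^ 3 / (10 * (a : ℂ) ^ 3 * (z₀ : ℂ) ^ 3))))
      = Complex.I * (((z₀*a)^2/2 : ℝ) : ℂ) *
        ((((1-2*γ)*u^2 : ℝ):ℂ) * e^2 + ((u^3 : ℝ):ℂ) * e^3 + ((u^4/2 : ℝ):ℂ) * e^4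
          + ((u^5/10 : ℝ):ℂ) * e^5) := by
    rw [e1, e2, e3]
    push_cast
    field_simp
    ring
  rw [key]
  have genre : ∀ (c : ℝ) (w : ℂ), (Complex.I * (c:ℂ) * w).re = -(c * w.im) := by
    intro c w
    simp [Complex.mul_re, Complex.mul_im]
  have h2 := hek 2; have h3 := hek 3; have h4 := hek 4; have h5 := hek 5
  push_cast at h2 h3 h4 h5
  have hre : (Complex.I * (((z₀*a)^2/2 : ℝ) : ℂ) *
        ((((1-2*γ)*u^2 : ℝ):ℂ) * e^2 + ((u^3 : ℝ):ℂ) * e^3 + ((u^4/2 : ℝ):ℂ) * e^4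
          + ((u^5/10 : ℝ):ℂ) * e^5)).re
      = -((z₀*a)^2/2 * ((1-2*γ)*u^2 * (Real.sin (2*α)) + u^3 * (Real.sin (3*α)) + u^4/2 * (Real.sin (4*α)) + u^5/10 * (Real.sin (5*α)))) := by
    rw [genre]
    simp only [Complex.add_im, Complex.mul_im, Complex.ofReal_re, Complex.ofReal_im, h2, h3, h4, h5]
    ring
  have hQ : 0 ≤ (1-2*γ)*u^2 * (Real.sin (2*α)) + u^3 * (Real.sin (3*α))
      + u^4/2 * (Real.sin (4*α)) + u^5/10 * (Real.sin (5*α)) :=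
    bracket_nonneg_aux _ _ _ _ _ _ hβ hs2 hs3 hs4 hs5 (Real.sin_le_one _) (Real.sin_le_one _) hu
  have hfin : (0:ℝ) ≤ (z₀*a)^2/2 * ((1-2*γ)*u^2 * (Real.sin (2*α)) + u^3 * (Real.sin (3*α)) + u^4/2 * (Real.sin (4*α)) + u^5/10 * (Real.sin (5*α))) :=
    mul_nonneg (by positivity) hQ
  constructor
  · rw [hre]
    linarith
  · rw [Complex.norm_exp, hre]
    calc Real.exp (-((z₀*a)^2/2 * ((1-2*γ)*u^2 * (Real.sin (2*α)) + u^3 * (Real.sin (3*α)) + u^4/2 * (Real.sin (4*α)) + u^5/10 * (Real.sin (5*α)))))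
        ≤ Real.exp 0 := Real.exp_le_exp.mpr (by linarith)
      _ = 1 := Real.exp_zero
end
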